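/- Let n ≥ 1, let (W, γ) be a Hermitian Clifford module for ℝ^{n+1}, and let a ∈ W with ‖a‖ = 1. Then for each choice of sign ±, the vector ζ_a^± ∈ ℝ^{n+2} satisfies (ζ_a^±)_{n+2} = 1 and η(ζ_a^±, ζ_a^±) ≤ 0; that is, ζ_a^± is a future-directed causal (non-spacelike) vector in Minkowski space. -/

import Mathlib

/-!
Minkowski space `ℝ^{n+1,1}` is modeled as `EuclideanSpace ℝ (Fin (n+1)) × ℝ`,
with the bilinear form `η(v,w) = Σ_j v_j w_j − v_{n+2} w_{n+2}`.
A Hermitian Clifford module for `ℝ^{n+1}` is a complex inner product space `W`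
with an `ℝ`-linear map `γ : ℝ^{n+1} →ₗ[ℝ] End_ℂ(W)` such that
`γ(v)² = −|v|²·Id` and each `γ(v)` is skew-Hermitian.
-/

/-- The Minkowski bilinear form on `ℝ^{n+1,1}`. -/
noncomputable def minkowski (n : ℕ) (v w : EuclideanSpace ℝ (Fin (n + 1)) × ℝ) : ℝ :=
  (inner ℝ v.1 w.1 : ℝ) - v.2 * w.2

/-- The vector `ζ_a^±` of Minkowski space associated to a spinor `a`:
its `j`-th spatial component is `∓i⟨γ(e_j)a, a⟩` (a real number) and its time
component is `‖a‖²`.  The sign `±` is encoded by `ε ∈ {1, -1}`. -/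
noncomputable def zetaVec (n : ℕ) {W : Type*} [NormedAddCommGroup W] [InnerProductSpace ℂ W]
    (γ : EuclideanSpace ℝ (Fin (n + 1)) →ₗ[ℝ] (W →ₗ[ℂ] W)) (ε : ℝ) (a : W) :
    EuclideanSpace ℝ (Fin (n + 1)) × ℝ :=
  ((WithLp.toLp 2 (fun j => (-(ε : ℂ) * Complex.I *
      (inner ℂ (γ (EuclideanSpace.single j (1 : ℝ)) a) a : ℂ)).re) :
      EuclideanSpace ℝ (Fin (n + 1))),
    ‖a‖ ^ 2)

/-- For a unit spinor `a` and each choice of sign, the vector `ζ_a^±` has time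
component `1` and satisfies `η(ζ_a^±, ζ_a^±) ≤ 0`; i.e. it is a future-directed
causal (non-spacelike) vector in Minkowski space. -/
theorem zetaVec_causal (n : ℕ) (hn : 1 ≤ n)
    (W : Type*) [NormedAddCommGroup W] [InnerProductSpace ℂ W] [FiniteDimensional ℂ W]
    (γ : EuclideanSpace ℝ (Fin (n + 1)) →ₗ[ℝ] (W →ₗ[ℂ] W))
    (hγsq : ∀ v : EuclideanSpace ℝ (Fin (n + 1)),
      γ v ∘ₗ γ v = ((-(‖v‖ ^ 2 : ℝ) : ℂ)) • (LinearMap.id : W →ₗ[ℂ] W))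
    (hγskew : ∀ (v : EuclideanSpace ℝ (Fin (n + 1))) (ψ φ : W),
      (inner ℂ (γ v ψ) φ : ℂ) = -(inner ℂ ψ (γ v φ) : ℂ))
    (a : W) (ha : ‖a‖ = 1) (ε : ℝ) (hε : ε = 1 ∨ ε = -1) :
    (zetaVec n γ ε a).2 = 1 ∧
      minkowski n (zetaVec n γ ε a) (zetaVec n γ ε a) ≤ 0 := by

  set s : Fin (n+1) → ℝ := fun j => (inner ℂ (γ (EuclideanSpace.single j (1:ℝ)) a) a : ℂ).im with hs
  set v : EuclideanSpace ℝ (Fin (n+1)) := ∑ j, s j • EuclideanSpace.single j (1:ℝ) with hv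
  have hγv : γ v a = ∑ j, s j • (γ (EuclideanSpace.single j (1:ℝ)) a) := by
    simp [hv, map_sum, LinearMap.map_smul, LinearMap.sum_apply, LinearMap.smul_apply]
  have him : (inner ℂ (γ v a) a : ℂ).im = ∑ j, s j ^ 2 := by
    rw [hγv, sum_inner, Complex.im_sum]
    refine Finset.sum_congr rfl fun j _ => ?_
    rw [RCLike.real_smul_eq_coe_smul (K := ℂ), inner_smul_real_left]
    simp [hs, sq]
  have hnorm : ‖γ v a‖ = ‖v‖ := by
    have h1 : (inner ℂ (γ v a) (γ v a) : ℂ) = ((‖v‖^2 : ℝ) : ℂ) := by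
      rw [hγskew v a (γ v a)]
      have h0 : γ v (γ v a) = (γ v ∘ₗ γ v) a := rfl
      rw [h0, hγsq v]
      simp [inner_smul_right, inner_self_eq_norm_sq_to_K, ha]
    have h2 : ‖γ v a‖^2 = ‖v‖^2 := by
      rw [← inner_self_eq_norm_sq (𝕜 := ℂ), h1]
      norm_cast
    nlinarith [norm_nonneg (γ v a), norm_nonneg v]
  have hvj : ∀ j, v j = s j := by
    intro j
    have h := Finset.sum_apply j Finset.univ (fun x => s x • EuclideanSpace.single x (1:ℝ))
    rw [hv]
    rw [show (∑ x, s x • EuclideanSpace.single x (1:ℝ)) j = ∑ x, (s x • EuclideanSpace.single x (1:ℝ)) j from by rw [WithLp.ofLp_sum]; exact h]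
    simp [EuclideanSpace.single_apply]
  have hvn : ‖v‖ = Real.sqrt (∑ j, s j ^ 2) := by
    rw [EuclideanSpace.norm_eq]
    congr 1
    refine Finset.sum_congr rfl fun j _ => ?_
    rw [hvj j, Real.norm_eq_abs, sq_abs]
  have hcs : |(inner ℂ (γ v a) a : ℂ).im| ≤ ‖γ v a‖ * ‖a‖ := by
    calc |(inner ℂ (γ v a) a : ℂ).im| ≤ ‖(inner ℂ (γ v a) a : ℂ)‖ := Complex.abs_im_le_norm _
      _ ≤ ‖γ v a‖ * ‖a‖ := norm_inner_le_norm _ _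
  have hSle : (∑ j, s j ^ 2) ≤ 1 := by
    rw [him, hnorm, ha, hvn, mul_one] at hcs
    have hS0 : (0:ℝ) ≤ ∑ j, s j ^ 2 := Finset.sum_nonneg fun j _ => sq_nonneg _
    rw [abs_of_nonneg hS0] at hcs
    nlinarith [Real.sq_sqrt hS0, Real.sqrt_nonneg (∑ j, s j ^ 2)]
  refine ⟨by simp [zetaVec, ha], ?_⟩
  have hcomp : ∀ j, (zetaVec n γ ε a).1 j = ε * s j := by
    intro j
    simp only [zetaVec, hs]
    simp [Complex.mul_re, Complex.mul_im]
  have hε2 : ε * ε = 1 := by rcases hε with h | h <;> rw [h] <;> norm_num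
  have hinner : (inner ℝ (zetaVec n γ ε a).1 (zetaVec n γ ε a).1 : ℝ) = ∑ j, s j ^ 2 := by
    rw [PiLp.inner_apply]
    refine Finset.sum_congr rfl fun j _ => ?_
    simp [hcomp j, RCLike.inner_apply]
    ring_nf
    rw [sq_abs, sq_abs, sq ε, hε2, one_mul]
  rw [minkowski, hinner]
  simp [zetaVec, ha]
  linarith
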